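/- Let A be a unital associative finite-dimensional algebra over a field F and let R be a Rota–Baxter operator of weight 0 on A. Then the image of R contains no invertible element of A. -/

import Mathlib

/-- If `R` is a Rota–Baxter operator of weight 0 on a unital associative finite-dimensional
algebra `A` over a field `F`, then the image of `R` contains no invertible element of `A`. -/
theorem rotaBaxter_range_no_unit {F A : Type*} [Field F] [Ring A] [Algebra F A]
    [Nontrivial A] [FiniteDimensional F A]
    (R : A →ₗ[F] A) (hR : ∀ x y : A, R x * R y = R (R x * y + x * R y)) :
    ∀ u ∈ LinearMap.range R, ¬ IsUnit u := by
  rintro u ⟨a, rfl⟩ hu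
  -- all positive powers of `R a` lie in the range of `R`
  have hpow : ∀ n : ℕ, (R a) ^ (n + 1) ∈ LinearMap.range R := by
    intro n
    induction n with
    | zero => exact ⟨a, by simp⟩
    | succ n ih =>
      obtain ⟨b, hb⟩ := ih
      refine ⟨R b * a + b * R a, ?_⟩
      rw [pow_succ, ← hb]
      exact (hR b a).symm
  -- minimal polynomial business
  have hint : IsIntegral F (R a) := IsIntegral.of_finite F (R a)
  set p := minpoly F (R a) with hp
  have hc0 : p.coeff 0 ≠ 0 := by
    intro h0
    obtain ⟨q, hq⟩ := (Polynomial.X_dvd_iff).2 h0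
    have hq0 : q ≠ 0 := by
      rintro rfl
      exact minpoly.ne_zero hint (by simpa using hq)
    have haq : Polynomial.aeval (R a) q = 0 := by
      have h1 : Polynomial.aeval (R a) p = 0 := minpoly.aeval F (R a)
      rw [hq] at h1
      simp only [map_mul, Polynomial.aeval_X] at h1
      obtain ⟨v, hv⟩ := hu.exists_left_inv
      calc Polynomial.aeval (R a) q
          = (v * R a) * Polynomial.aeval (R a) q := by rw [hv, one_mul]
        _ = v * (R a * Polynomial.aeval (R a) q) := by rw [mul_assoc]
        _ = 0 := by rw [h1, mul_zero]
    have hdeg : p.degree ≤ q.degree := minpoly.degree_le_of_ne_zero F (R a) hq0 haq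
    have hdeg2 : q.degree < p.degree := by
      rw [hq, Polynomial.degree_mul, Polynomial.degree_X]
      have := Polynomial.degree_eq_natDegree hq0
      rw [this]
      exact_mod_cast lt_add_of_pos_left _ (by norm_num)
    exact absurd hdeg (not_le.2 hdeg2)
  -- 1 belongs to the range of R
  have h1mem : (1 : A) ∈ LinearMap.range R := by
    have haev : Polynomial.aeval (R a) p = 0 := minpoly.aeval F (R a)
    rw [Polynomial.aeval_eq_sum_range] at haev
    rw [Finset.sum_range_succ'] at haev
    have hsum : ∑ i ∈ Finset.range p.natDegree, p.coeff (i + 1) • (R a) ^ (i + 1)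
        ∈ LinearMap.range R := by
      refine Submodule.sum_mem _ fun i _ => Submodule.smul_mem _ _ (hpow i)
    have hc : p.coeff 0 • (1 : A) ∈ LinearMap.range R := by
      have : p.coeff 0 • ((R a) ^ 0) = -(∑ i ∈ Finset.range p.natDegree,
          p.coeff (i + 1) • (R a) ^ (i + 1)) := by
        rw [eq_neg_iff_add_eq_zero, add_comm]
        exact haev
      rw [pow_zero] at this
      rw [this]
      exact Submodule.neg_mem _ hsum
    have := Submodule.smul_mem _ (p.coeff 0)⁻¹ hc
    rwa [smul_smul, inv_mul_cancel₀ hc0, one_smul] at this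
  obtain ⟨t, ht⟩ := h1mem
  have h2 := hR t t
  simp only [ht, one_mul, mul_one] at h2
  rw [map_add, ht] at h2
  exact one_ne_zero (right_eq_add.mp h2)
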